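/- arXiv:1811.10443 — 2 statements merged into one kernel-verified Lean document; each statement's English description precedes it below -/
import Mathlib

section
/- Let Σ₀ ∈ ℝ^{p×p} be symmetric positive semidefinite whose largest eigenvalue Λ₁ is strictly larger than its second largest eigenvalue Λ₂, and whose unit top eigenvector u₁ has at most s nonzero entries. Let Σ̃ ∈ ℝ^{p×p} be symmetric, let μ ≥ 2‖Σ̃ − Σ₀‖_∞, let F̂ be the Fantope SDP estimator with input Σ̃ and tuning parameter μ, and let û₁ be a unit eigenvector of F̂ corresponding to its largest eigenvalue, normalized so that û₁ᵀu₁ ≥ 0. Then there exists a universal constant C > 0 such that ‖û₁ − u₁‖₂² ≤ 4C s² μ² / (Λ₁ − Λ₂)². -/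
open Matrix Finset

noncomputable section

/-- Euclidean norm on `Fin p → ℝ`. -/
def l2 {p : ℕ} (v : Fin p → ℝ) : ℝ := Real.sqrt (∑ j, v j ^ 2)

/-- Inner product on `Fin p → ℝ`. -/
def dotp {p : ℕ} (v w : Fin p → ℝ) : ℝ := ∑ j, v j * w j

/-- Entrywise sup norm `‖A‖_∞ = max_{j,k} |A_{jk}|`. -/
def msup {p : ℕ} (A : Matrix (Fin p) (Fin p) ℝ) : ℝ := ⨆ j, ⨆ k, |A j k|

/-- Entrywise ℓ¹ norm `‖A‖₁ = ∑_{j,k} |A_{jk}|`. -/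
def m1 {p : ℕ} (A : Matrix (Fin p) (Fin p) ℝ) : ℝ := ∑ j, ∑ k, |A j k|

/-- The Fantope `{F : F symmetric, 0 ⪯ F ⪯ I, trace F = 1}`. -/
def Fantope (p : ℕ) : Set (Matrix (Fin p) (Fin p) ℝ) :=
  {F | F.IsSymm ∧ F.PosSemidef ∧ (1 - F).PosSemidef ∧ F.trace = 1}

/-- `F` is a Fantope SDP estimator with input `S` and tuning parameter `μ`:
a minimizer of `F ↦ -trace(S F) + μ ‖F‖₁` over the Fantope. -/
def IsFantopeSol {p : ℕ} (S : Matrix (Fin p) (Fin p) ℝ) (μ : ℝ)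
    (F : Matrix (Fin p) (Fin p) ℝ) : Prop :=
  F ∈ Fantope p ∧
    ∀ G ∈ Fantope p, -(S * F).trace + μ * m1 F ≤ -(S * G).trace + μ * m1 G

namespace FB

variable {p : ℕ}

/-- Frobenius inner product. -/
def fr (A B : Matrix (Fin p) (Fin p) ℝ) : ℝ := ∑ j, ∑ k, A j k * B j k

lemma fr_comm (A B : Matrix (Fin p) (Fin p) ℝ) : fr A B = fr B A := by
  simp [fr, mul_comm]

lemma fr_sub_right (M A B : Matrix (Fin p) (Fin p) ℝ) :
    fr M (A - B) = fr M A - fr M B := by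
  simp [fr, Matrix.sub_apply, mul_sub, Finset.sum_sub_distrib]

lemma fr_sub_left (M A B : Matrix (Fin p) (Fin p) ℝ) :
    fr (A - B) M = fr A M - fr B M := by
  simp [fr, Matrix.sub_apply, sub_mul, Finset.sum_sub_distrib]

lemma fr_prod (A B : Matrix (Fin p) (Fin p) ℝ) :
    fr A B = ∑ x ∈ univ ×ˢ univ, A x.1 x.2 * B x.1 x.2 := by
  rw [Finset.sum_product]; rfl

lemma fr_cauchy (A B : Matrix (Fin p) (Fin p) ℝ) :
    (fr A B) ^ 2 ≤ fr A A * fr B B := by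
  rw [fr_prod, fr_prod, fr_prod]
  have h := Finset.sum_mul_sq_le_sq_mul_sq (univ ×ˢ univ)
    (fun x : Fin p × Fin p => A x.1 x.2) (fun x => B x.1 x.2)
  simpa [pow_two, mul_assoc, mul_comm, mul_left_comm] using h

lemma fr_self_nonneg (A : Matrix (Fin p) (Fin p) ℝ) : 0 ≤ fr A A :=
  Finset.sum_nonneg fun _ _ => Finset.sum_nonneg fun _ _ => mul_self_nonneg _

lemma dotp_comm (v w : Fin p → ℝ) : dotp v w = dotp w v := by
  simp [dotp, mul_comm]

lemma dotp_sub_left (u v w : Fin p → ℝ) : dotp (u - v) w = dotp u w - dotp v w := by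
  simp [dotp, Pi.sub_apply, sub_mul, Finset.sum_sub_distrib]

lemma dotp_smul_left (c : ℝ) (v w : Fin p → ℝ) : dotp (c • v) w = c * dotp v w := by
  simp [dotp, Pi.smul_apply, Finset.mul_sum, mul_assoc]

lemma dotp_smul_right (c : ℝ) (v w : Fin p → ℝ) : dotp v (c • w) = c * dotp v w := by
  rw [dotp_comm, dotp_smul_left, dotp_comm]

lemma dotp_sub_right (u v w : Fin p → ℝ) : dotp u (v - w) = dotp u v - dotp u w := by
  rw [dotp_comm, dotp_sub_left, dotp_comm u v, dotp_comm u w]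

/-- For symmetric `M`, `⟨x, M y⟩ = ⟨y, M x⟩`. -/
lemma dotp_mulVec_symm {M : Matrix (Fin p) (Fin p) ℝ} (hM : M.IsSymm)
    (x y : Fin p → ℝ) : dotp x (M *ᵥ y) = dotp y (M *ᵥ x) := by
  simp only [dotp, Matrix.mulVec, dotProduct, Finset.mul_sum]
  rw [Finset.sum_comm]
  refine Finset.sum_congr rfl fun j _ => Finset.sum_congr rfl fun k _ => ?_
  rw [hM.apply j k]; ring

end FB

namespace FB
variable {p : ℕ}

/-- The rank-one matrix `v vᵀ`. -/
def vv (v : Fin p → ℝ) : Matrix (Fin p) (Fin p) ℝ := Matrix.of fun j k => v j * v k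

lemma vv_mulVec (v x : Fin p → ℝ) : (vv v) *ᵥ x = (dotp v x) • v := by
  funext j
  simp [vv, Matrix.mulVec, dotProduct, dotp, Finset.mul_sum, mul_assoc, mul_comm,
    mul_left_comm]

lemma dotp_vv (v x : Fin p → ℝ) : dotp x ((vv v) *ᵥ x) = (dotp v x) ^ 2 := by
  rw [vv_mulVec, dotp_smul_right, dotp_comm x v, sq]

lemma fr_vv (M : Matrix (Fin p) (Fin p) ℝ) (v : Fin p → ℝ) :
    fr M (vv v) = dotp v (M *ᵥ v) := by
  simp only [fr, vv, Matrix.of_apply, dotp, Matrix.mulVec, dotProduct, Finset.mul_sum]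
  refine Finset.sum_congr rfl fun j _ => Finset.sum_congr rfl fun k _ => by ring

/-- Aggregation over rows of a Gram decomposition. -/
lemma fr_gram (M F : Matrix (Fin p) (Fin p) ℝ) (B : Matrix (Fin p) (Fin p) ℝ)
    (hF : ∀ j k, F j k = ∑ i, B i j * B i k) :
    fr M F = ∑ i, dotp (fun j => B i j) (M *ᵥ fun j => B i j) := by
  simp only [fr, dotp, Matrix.mulVec, dotProduct, Finset.mul_sum, hF]
  conv_lhs => rw [show (∑ j : Fin p, ∑ k : Fin p, ∑ i : Fin p, M j k * (B i j * B i k)) = ∑ j : Fin p, ∑ i : Fin p, ∑ k : Fin p, M j k * (B i j * B i k) from Finset.sum_congr rfl fun j _ => Finset.sum_comm]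

  rw [Finset.sum_comm]
  refine Finset.sum_congr rfl fun i _ => Finset.sum_congr rfl fun j _ => ?_
  exact Finset.sum_congr rfl fun k _ => by ring

lemma trace_mul_fr (S F : Matrix (Fin p) (Fin p) ℝ) (hF : F.IsSymm) :
    (S * F).trace = fr S F := by
  simp only [Matrix.trace, Matrix.diag, Matrix.mul_apply, fr]
  exact Finset.sum_congr rfl fun j _ => Finset.sum_congr rfl fun k _ => by
    rw [hF.apply j k]

/-- PSD quadratic form over ℝ. -/
lemma psd_dotp {M : Matrix (Fin p) (Fin p) ℝ} (hM : M.PosSemidef) (x : Fin p → ℝ) :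
    0 ≤ dotp x (M *ᵥ x) := by
  have := hM.dotProduct_mulVec_nonneg x
  simpa [dotProduct, dotp] using this

lemma entry_le_msup (A : Matrix (Fin p) (Fin p) ℝ) (j k : Fin p) :
    |A j k| ≤ (⨆ j, ⨆ k, |A j k|) := by
  have h1 : |A j k| ≤ ⨆ k, |A j k| :=
    le_ciSup (f := fun k => |A j k|) (Set.Finite.bddAbove (Set.finite_range _)) k
  exact h1.trans (le_ciSup (f := fun j => ⨆ k, |A j k|)
    (Set.Finite.bddAbove (Set.finite_range _)) j)

end FB


namespace FB
variable {p : ℕ}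

lemma vv_herm (u₁ : Fin p → ℝ) : (vv u₁).IsHermitian := by
  ext j k
  simp [vv, Matrix.conjTranspose_apply, mul_comm]

lemma fantope_vv (u₁ : Fin p → ℝ) (hu : ∑ j, u₁ j ^ 2 = 1) : vv u₁ ∈ Fantope p := by
  have hu' : dotp u₁ u₁ = 1 := by
    rw [dotp, ← hu]; exact Finset.sum_congr rfl fun j _ => (sq (u₁ j)).symm
  refine ⟨?_, Matrix.PosSemidef.of_dotProduct_mulVec_nonneg (vv_herm u₁) ?_, Matrix.PosSemidef.of_dotProduct_mulVec_nonneg ((Matrix.isHermitian_one).sub (vv_herm u₁)) ?_, ?_⟩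
  · ext j k; simp [vv, Matrix.transpose_apply, mul_comm]
  · intro x
    have : dotProduct (star x) (vv u₁ *ᵥ x) = dotp x (vv u₁ *ᵥ x) := by
      simp [dotProduct, dotp]
    rw [this, dotp_vv]; positivity
  · intro x
    have h1 : dotProduct (star x) ((1 - vv u₁) *ᵥ x) = dotp x x - dotp x (vv u₁ *ᵥ x) := by
      rw [Matrix.sub_mulVec, Matrix.one_mulVec]
      simp [dotProduct, dotp, Pi.sub_apply, mul_sub, Finset.sum_sub_distrib]
    rw [h1, dotp_vv]
    have hx : dotp x x = ∑ j, x j ^ 2 := by simp [dotp, sq]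
    have hdu : dotp u₁ x = ∑ j, u₁ j * x j := rfl
    rw [hdu, hx]
    nlinarith [Finset.sum_mul_sq_le_sq_mul_sq univ u₁ x, hu]
  · simp only [Matrix.trace, Matrix.diag, vv, Matrix.of_apply]
    rw [← hu]; exact Finset.sum_congr rfl fun j _ => (sq (u₁ j)).symm

lemma curvature (S₀ F : Matrix (Fin p) (Fin p) ℝ) (u₁ : Fin p → ℝ) (Λ₁ Λ₂ : ℝ)
    (hS₀sym : S₀.IsSymm)
    (hEig : S₀ *ᵥ u₁ = Λ₁ • u₁) (hu : dotp u₁ u₁ = 1)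
    (hRay2 : ∀ w, dotp w u₁ = 0 → dotp w (S₀ *ᵥ w) ≤ Λ₂ * dotp w w)
    (hF : F ∈ Fantope p) :
    (Λ₁ - Λ₂) * (1 - fr (vv u₁) F) ≤ fr S₀ (vv u₁ - F) ∧
      fr (vv u₁ - F) (vv u₁ - F) ≤ 2 * (1 - fr (vv u₁) F) := by
  obtain ⟨hFsym, hFpsd, hIFpsd, htr⟩ := hF
  obtain ⟨B, hB⟩ : ∃ B : Matrix (Fin p) (Fin p) ℝ, F = Bᴴ * B := by
    open scoped MatrixOrder in
    obtain ⟨B, hB⟩ := CStarAlgebra.nonneg_iff_eq_star_mul_self.mp hFpsd.nonneg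
    exact ⟨B, by rw [hB, star_eq_conjTranspose]⟩
  have hFent : ∀ j k, F j k = ∑ i, B i j * B i k := by
    intro j k
    rw [hB]
    simp [Matrix.mul_apply, Matrix.conjTranspose_apply]
  set b : Fin p → (Fin p → ℝ) := fun i j => B i j with hb
  -- row-wise Rayleigh bound
  have hrow : ∀ i, dotp (b i) (S₀ *ᵥ b i) ≤
      Λ₁ * (dotp (b i) u₁) ^ 2 + Λ₂ * (dotp (b i) (b i) - (dotp (b i) u₁) ^ 2) := by
    intro i
    set w : Fin p → ℝ := b i - (dotp (b i) u₁) • u₁ with hw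
    have hwu : dotp w u₁ = 0 := by
      rw [hw, dotp_sub_left, dotp_smul_left, hu, mul_one, sub_self]
    have hsym1 : dotp u₁ (S₀ *ᵥ b i) = Λ₁ * dotp (b i) u₁ := by
      rw [dotp_mulVec_symm hS₀sym, hEig, dotp_smul_right, dotp_comm]
    have hdub : dotp u₁ (b i) = dotp (b i) u₁ := dotp_comm _ _
    have h2 := hRay2 w hwu
    have hmv : S₀ *ᵥ w = S₀ *ᵥ b i - (dotp (b i) u₁) • (Λ₁ • u₁) := by
      rw [hw, Matrix.mulVec_sub, Matrix.mulVec_smul, hEig]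
    have hexp : dotp w (S₀ *ᵥ w)
        = dotp (b i) (S₀ *ᵥ b i) - Λ₁ * (dotp (b i) u₁) ^ 2 := by
      rw [hw, hmv, dotp_sub_left, dotp_sub_right, dotp_sub_right,
        dotp_smul_right, dotp_smul_right, dotp_smul_left, dotp_smul_left,
        dotp_smul_right, dotp_smul_right, hsym1, hu]
      ring
    have hww : dotp w w = dotp (b i) (b i) - (dotp (b i) u₁) ^ 2 := by
      rw [hw, dotp_sub_left, dotp_sub_right, dotp_sub_right, dotp_smul_left,
        dotp_smul_right, dotp_smul_left, dotp_smul_right, hu, hdub]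
      ring
    rw [hexp, hww] at h2
    linarith
  have hfrS₀F : fr S₀ F = ∑ i, dotp (b i) (S₀ *ᵥ b i) := fr_gram S₀ F B hFent
  have htF : fr (vv u₁) F = ∑ i, (dotp (b i) u₁) ^ 2 := by
    rw [fr_gram (vv u₁) F B hFent]
    refine Finset.sum_congr rfl fun i _ => ?_
    rw [dotp_vv, dotp_comm u₁ (b i)]
  have htrB : ∑ i, dotp (b i) (b i) = 1 := by
    rw [← htr]
    simp only [Matrix.trace, Matrix.diag, hFent, dotp]
    rw [Finset.sum_comm]
  have hS₀F : fr S₀ F ≤ Λ₁ * fr (vv u₁) F + Λ₂ * (1 - fr (vv u₁) F) := by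
    rw [hfrS₀F]
    calc ∑ i, dotp (b i) (S₀ *ᵥ b i)
        ≤ ∑ i, (Λ₁ * (dotp (b i) u₁) ^ 2
            + Λ₂ * (dotp (b i) (b i) - (dotp (b i) u₁) ^ 2)) :=
          Finset.sum_le_sum fun i _ => hrow i
      _ = Λ₁ * (∑ i, (dotp (b i) u₁) ^ 2)
          + Λ₂ * ((∑ i, dotp (b i) (b i)) - ∑ i, (dotp (b i) u₁) ^ 2) := by
          rw [Finset.sum_add_distrib, ← Finset.mul_sum, ← Finset.mul_sum,
            Finset.sum_sub_distrib]
      _ = Λ₁ * fr (vv u₁) F + Λ₂ * (1 - fr (vv u₁) F) := by rw [← htF, htrB]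
  have hS₀vv : fr S₀ (vv u₁) = Λ₁ := by
    rw [fr_vv, hEig, dotp_smul_right, hu, mul_one]
  have hFF : fr F F ≤ 1 := by
    rw [fr_gram F F B hFent, ← htrB]
    refine Finset.sum_le_sum fun i _ => ?_
    have h0 := psd_dotp hIFpsd (b i)
    have heq : dotp (b i) ((1 - F) *ᵥ b i)
        = dotp (b i) (b i) - dotp (b i) (F *ᵥ b i) := by
      rw [Matrix.sub_mulVec, Matrix.one_mulVec, dotp_sub_right]
    rw [heq] at h0
    linarith
  have hvvvv : fr (vv u₁) (vv u₁) = 1 := by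
    rw [fr_vv, dotp_vv, hu, one_pow]
  constructor
  · rw [fr_sub_right, hS₀vv]; linarith
  · rw [fr_sub_right, fr_sub_left, fr_sub_left, hvvvv, fr_comm F (vv u₁)]
    linarith

end FB

open FB

set_option maxHeartbeats 1000000 in
/-- There is a universal constant `C > 0` such that for every symmetric
psd `S₀` with top eigenvalue `Λ₁`, second largest eigenvalue `Λ₂ < Λ₁` and `s`-sparse unit
top eigenvector `u₁`, every symmetric `Σ̃`, every `μ ≥ 2‖Σ̃ − S₀‖_∞`, every Fantope SDP
solution `Fh`, and every unit top eigenvector `uh` of `Fh` with `uhᵀu₁ ≥ 0`, one has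
`‖uh − u₁‖₂² ≤ 4 C s² μ² / (Λ₁ − Λ₂)²`. -/
theorem fantope_eigenvector_bound :
    ∃ C : ℝ, 0 < C ∧
      ∀ (p s : ℕ) (S₀ St Fh : Matrix (Fin p) (Fin p) ℝ) (u₁ uh : Fin p → ℝ)
        (Λ₁ Λ₂ μ : ℝ),
        S₀.IsSymm → S₀.PosSemidef →
        -- `u₁` is a unit eigenvector of `S₀` for the eigenvalue `Λ₁`
        S₀.mulVec u₁ = Λ₁ • u₁ → l2 u₁ = 1 →
        -- `Λ₁` is the largest eigenvalue of `S₀`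
        (∀ w : Fin p → ℝ, dotp w (S₀.mulVec w) ≤ Λ₁ * dotp w w) →
        -- all other eigenvalues are at most `Λ₂`
        (∀ w : Fin p → ℝ, dotp w u₁ = 0 → dotp w (S₀.mulVec w) ≤ Λ₂ * dotp w w) →
        Λ₂ < Λ₁ →
        -- `u₁` has at most `s` nonzero entries
        ((univ : Finset (Fin p)).filter (fun j => u₁ j ≠ 0)).card ≤ s →
        St.IsSymm → 2 * msup (St - S₀) ≤ μ →
        IsFantopeSol St μ Fh →
        -- `uh` is a unit top eigenvector of `Fh`
        (∃ ν : ℝ, Fh.mulVec uh = ν • uh ∧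
          ∀ w : Fin p → ℝ, dotp w (Fh.mulVec w) ≤ ν * dotp w w) →
        l2 uh = 1 → 0 ≤ dotp uh u₁ →
        l2 (uh - u₁) ^ 2 ≤ 4 * C * (s : ℝ) ^ 2 * μ ^ 2 / (Λ₁ - Λ₂) ^ 2 := by
  refine ⟨9, by norm_num, ?_⟩
  intro p s S₀ St Fh u₁ uh Λ₁ Λ₂ μ hS₀sym _hS₀psd hEig hu₁ _hRay1 hRay2 hgap hsparse
    _hStsym hμ hSol hTop huhl2 ht0
  obtain ⟨ν, hν, hνtop⟩ := hTop
  -- basic normalizations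
  have husq : ∑ j, u₁ j ^ 2 = 1 := by
    have h := congrArg (· ^ 2) hu₁
    simpa [l2, Real.sq_sqrt (Finset.sum_nonneg fun j _ => sq_nonneg (u₁ j))] using h
  have huhsq : ∑ j, uh j ^ 2 = 1 := by
    have h := congrArg (· ^ 2) huhl2
    simpa [l2, Real.sq_sqrt (Finset.sum_nonneg fun j _ => sq_nonneg (uh j))] using h
  have hu : dotp u₁ u₁ = 1 := by
    rw [dotp, ← husq]; exact Finset.sum_congr rfl fun j _ => (sq (u₁ j)).symm
  have huh : dotp uh uh = 1 := by
    rw [dotp, ← huhsq]; exact Finset.sum_congr rfl fun j _ => (sq (uh j)).symm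
  have hp : 0 < p := by
    rcases Nat.eq_zero_or_pos p with h | h
    · subst h; simp at husq
    · exact h
  have j0 : Fin p := ⟨0, hp⟩
  have hgap' : (0:ℝ) < Λ₁ - Λ₂ := by linarith only [hgap]
  -- membership of the projector
  have hvvmem : vv u₁ ∈ Fantope p := fantope_vv u₁ husq
  obtain ⟨hFsym, hFpsd, hIFpsd, htr⟩ := hSol.1
  -- abbreviations
  set Δ : Matrix (Fin p) (Fin p) ℝ := vv u₁ - Fh with hΔ
  set D : ℝ := fr Δ Δ with hD
  have hD0 : 0 ≤ D := fr_self_nonneg Δ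
  -- sup-norm bound on the noise
  set ε : ℝ := msup (St - S₀) with hε
  have hεle : ∀ j k, |(St - S₀) j k| ≤ ε := fun j k => entry_le_msup (St - S₀) j k
  have hε0 : 0 ≤ ε := le_trans (abs_nonneg _) (hεle j0 j0)
  have hεμ : 2 * ε ≤ μ := hμ
  have hμ0 : 0 ≤ μ := by linarith only [hεμ, hε0]
  -- curvature
  obtain ⟨hcurv1, hcurv2⟩ := curvature S₀ Fh u₁ Λ₁ Λ₂ hS₀sym hEig hu hRay2
    ⟨hFsym, hFpsd, hIFpsd, htr⟩
  -- optimality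
  have hvvsym : (vv u₁).IsSymm := by
    ext j k; simp [vv, Matrix.transpose_apply, mul_comm]
  have hopt := hSol.2 (vv u₁) hvvmem
  rw [trace_mul_fr St Fh hFsym, trace_mul_fr St (vv u₁) hvvsym] at hopt
  have hoptΔ : fr St Δ ≤ μ * (m1 (vv u₁) - m1 Fh) := by
    rw [hΔ, fr_sub_right]
    nlinarith only [hopt]
  -- perturbation bound
  have habs : |fr (St - S₀) Δ| ≤ ε * m1 Δ := by
    rw [fr, m1, Finset.mul_sum]
    calc |∑ j, ∑ k, (St - S₀) j k * Δ j k|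
        ≤ ∑ j, |∑ k, (St - S₀) j k * Δ j k| := Finset.abs_sum_le_sum_abs _ _
      _ ≤ ∑ j, ∑ k, |(St - S₀) j k * Δ j k| :=
          Finset.sum_le_sum fun j _ => Finset.abs_sum_le_sum_abs _ _
      _ ≤ ∑ j, ∑ k, ε * |Δ j k| := by
          refine Finset.sum_le_sum fun j _ => Finset.sum_le_sum fun k _ => ?_
          rw [abs_mul]
          exact mul_le_mul_of_nonneg_right (hεle j k) (abs_nonneg _)
      _ = ∑ j, ε * ∑ k, |Δ j k| := by
          exact Finset.sum_congr rfl fun j _ => (Finset.mul_sum _ _ _).symm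
  have key1 : fr S₀ Δ ≤ μ * (m1 (vv u₁) - m1 Fh) + ε * m1 Δ := by
    have h1 : fr (St - S₀) Δ = fr St Δ - fr S₀ Δ := fr_sub_left Δ St S₀
    have h2 := (abs_le.mp habs).1
    linarith only [h1, h2, hoptΔ]
  -- support split
  set T : Finset (Fin p) := univ.filter (fun j => u₁ j ≠ 0) with hT
  set Sset : Finset (Fin p × Fin p) := T ×ˢ T with hSset
  have hSsub : Sset ⊆ univ ×ˢ univ := Finset.subset_univ _
  set a : ℝ := ∑ x ∈ Sset, |Δ x.1 x.2| with ha
  set E : ℝ := ∑ x ∈ (univ ×ˢ univ) \ Sset, |Fh x.1 x.2| with hE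
  have ha0 : 0 ≤ a := Finset.sum_nonneg fun _ _ => abs_nonneg _
  have hE0 : 0 ≤ E := Finset.sum_nonneg fun _ _ => abs_nonneg _
  have hvv0 : ∀ x ∈ (univ ×ˢ univ) \ Sset, vv u₁ x.1 x.2 = 0 := by
    intro x hx
    rw [Finset.mem_sdiff] at hx
    have h2 := hx.2
    rw [hSset, Finset.mem_product, hT] at h2
    by_cases hb1 : u₁ x.1 = 0
    · simp [vv, hb1]
    by_cases hb2 : u₁ x.2 = 0
    · simp [vv, hb2]
    exact absurd ⟨by simp [hb1], by simp [hb2]⟩ h2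
  have hm1split : ∀ M : Matrix (Fin p) (Fin p) ℝ,
      m1 M = (∑ x ∈ Sset, |M x.1 x.2|) + ∑ x ∈ (univ ×ˢ univ) \ Sset, |M x.1 x.2| := by
    intro M
    rw [m1]
    rw [show (∑ j, ∑ k, |M j k|) = ∑ x ∈ univ ×ˢ univ, |M x.1 x.2| by
      rw [Finset.sum_product]]
    rw [← Finset.sum_sdiff hSsub, add_comm]
  have hΔSc : ∀ x ∈ (univ ×ˢ univ) \ Sset, |Δ x.1 x.2| = |Fh x.1 x.2| := by
    intro x hx
    rw [hΔ, Matrix.sub_apply, hvv0 x hx, zero_sub, abs_neg]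
  have hm1diff : m1 (vv u₁) - m1 Fh ≤ a - E := by
    rw [hm1split (vv u₁), hm1split Fh]
    have h1 : ∑ x ∈ (univ ×ˢ univ) \ Sset, |vv u₁ x.1 x.2| = 0 :=
      Finset.sum_eq_zero fun x hx => by rw [hvv0 x hx, abs_zero]
    have h2 : (∑ x ∈ Sset, |vv u₁ x.1 x.2|) - ∑ x ∈ Sset, |Fh x.1 x.2| ≤ a := by
      rw [ha, ← Finset.sum_sub_distrib]
      refine Finset.sum_le_sum fun x _ => ?_
      rw [hΔ, Matrix.sub_apply]
      exact abs_sub_abs_le_abs_sub _ _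
    rw [h1]
    linarith only [h2, hE]
  have hm1Δ : m1 Δ = a + E := by
    rw [hm1split Δ, ha, hE]
    congr 1
    exact Finset.sum_congr rfl hΔSc
  have key2 : fr S₀ Δ ≤ 3 / 2 * μ * a := by
    have h5 : μ * (m1 (vv u₁) - m1 Fh) ≤ μ * (a - E) :=
      mul_le_mul_of_nonneg_left hm1diff hμ0
    have h6 : ε * m1 Δ = ε * a + ε * E := by rw [hm1Δ]; ring
    have e1 : ε * a ≤ μ / 2 * a :=
      mul_le_mul_of_nonneg_right (by linarith only [hεμ]) ha0
    have e2 : ε * E ≤ μ * E :=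
      mul_le_mul_of_nonneg_right (by linarith only [hεμ, hε0]) hE0
    linarith only [key1, h5, h6, e1, e2]
  -- Cauchy-Schwarz on the support
  have hcard : (Sset.card : ℝ) ≤ (s : ℝ) ^ 2 := by
    rw [hSset, Finset.card_product]
    push_cast
    have h1 : (T.card : ℝ) ≤ (s : ℝ) := by exact_mod_cast (hsparse : T.card ≤ s)
    rw [sq]
    exact mul_le_mul h1 h1 (Nat.cast_nonneg _) (by positivity)
  have hsumsq : ∑ x ∈ Sset, |Δ x.1 x.2| ^ 2 ≤ D := by
    rw [hD, fr_prod]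
    calc ∑ x ∈ Sset, |Δ x.1 x.2| ^ 2 = ∑ x ∈ Sset, Δ x.1 x.2 * Δ x.1 x.2 := by
          refine Finset.sum_congr rfl fun x _ => ?_
          rw [sq_abs, sq]
      _ ≤ ∑ x ∈ univ ×ˢ univ, Δ x.1 x.2 * Δ x.1 x.2 :=
          Finset.sum_le_sum_of_subset_of_nonneg hSsub fun x _ _ => mul_self_nonneg _
  have hCS : a ^ 2 ≤ (s : ℝ) ^ 2 * D := by
    have h := sq_sum_le_card_mul_sum_sq (s := Sset) (f := fun x => |Δ x.1 x.2|)
    calc a ^ 2 ≤ (Sset.card : ℝ) * ∑ x ∈ Sset, |Δ x.1 x.2| ^ 2 := h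
      _ ≤ (s : ℝ) ^ 2 * D := by
          apply mul_le_mul hcard hsumsq (Finset.sum_nonneg fun _ _ => sq_nonneg _)
          positivity
  -- combine: gap * D ≤ 3 μ a
  have hgapD : (Λ₁ - Λ₂) * D ≤ 3 * μ * a := by
    calc (Λ₁ - Λ₂) * D ≤ (Λ₁ - Λ₂) * (2 * (1 - fr (vv u₁) Fh)) :=
          mul_le_mul_of_nonneg_left hcurv2 hgap'.le
      _ = 2 * ((Λ₁ - Λ₂) * (1 - fr (vv u₁) Fh)) := by ring
      _ ≤ 2 * fr S₀ Δ := by linarith only [hcurv1]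
      _ ≤ 2 * (3 / 2 * μ * a) := by linarith only [key2]
      _ = 3 * μ * a := by ring
  have hDbound : D ≤ 9 * (s : ℝ) ^ 2 * μ ^ 2 / (Λ₁ - Λ₂) ^ 2 := by
    rcases eq_or_lt_of_le hD0 with h | h
    · rw [← h]; positivity
    · have h1 : (Λ₁ - Λ₂) * D * ((Λ₁ - Λ₂) * D) ≤ 3 * μ * a * (3 * μ * a) :=
        mul_self_le_mul_self (mul_nonneg hgap'.le hD0) hgapD
      have h3 : 9 * μ ^ 2 * a ^ 2 ≤ 9 * μ ^ 2 * ((s : ℝ) ^ 2 * D) :=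
        mul_le_mul_of_nonneg_left hCS (by positivity)
      have h4 : ((Λ₁ - Λ₂) ^ 2 * D) * D ≤ (9 * (s : ℝ) ^ 2 * μ ^ 2) * D := by
        calc ((Λ₁ - Λ₂) ^ 2 * D) * D = (Λ₁ - Λ₂) * D * ((Λ₁ - Λ₂) * D) := by ring
          _ ≤ 3 * μ * a * (3 * μ * a) := h1
          _ = 9 * μ ^ 2 * a ^ 2 := by ring
          _ ≤ 9 * μ ^ 2 * ((s : ℝ) ^ 2 * D) := h3
          _ = (9 * (s : ℝ) ^ 2 * μ ^ 2) * D := by ring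
      have h5 : (Λ₁ - Λ₂) ^ 2 * D ≤ 9 * (s : ℝ) ^ 2 * μ ^ 2 :=
        le_of_mul_le_mul_right h4 h
      rw [le_div_iff₀ (by positivity : (0:ℝ) < (Λ₁ - Λ₂) ^ 2)]
      linarith only [h5]
  -- final eigenvector comparison
  set t2 : ℝ := dotp uh u₁ with ht2
  have ht2sq : t2 ^ 2 ≤ 1 := by
    have h := Finset.sum_mul_sq_le_sq_mul_sq univ uh u₁
    rw [ht2, dotp]
    calc (∑ j, uh j * u₁ j) ^ 2 ≤ (∑ j, uh j ^ 2) * ∑ j, u₁ j ^ 2 := h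
      _ = 1 := by rw [husq, huhsq, one_mul]
  set E2 : Matrix (Fin p) (Fin p) ℝ := vv u₁ - vv uh with hE2
  have hfrP1P : fr (vv u₁) (vv uh) = t2 ^ 2 := by
    rw [fr_vv, dotp_vv, ht2, dotp_comm]
  have hfrPP : fr (vv uh) (vv uh) = 1 := by rw [fr_vv, dotp_vv, huh, one_pow]
  have hvvvv : fr (vv u₁) (vv u₁) = 1 := by rw [fr_vv, dotp_vv, hu, one_pow]
  have hFhP : fr Fh (vv uh) = ν := by
    rw [fr_vv, hν, dotp_smul_right, huh, mul_one]
  have hFhP1 : fr Fh (vv u₁) ≤ ν := by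
    rw [fr_vv]
    calc dotp u₁ (Fh *ᵥ u₁) ≤ ν * dotp u₁ u₁ := hνtop u₁
      _ = ν := by rw [hu, mul_one]
  have hy0 : 0 ≤ 1 - t2 ^ 2 := by linarith only [ht2sq]
  have h1 : fr (vv u₁) E2 = 1 - t2 ^ 2 := by
    rw [hE2, fr_sub_right, hvvvv, hfrP1P]
  have h2 : fr Fh E2 ≤ 0 := by
    rw [hE2, fr_sub_right, hFhP]
    linarith only [hFhP1]
  have h3 : fr E2 E2 = 2 - 2 * t2 ^ 2 := by
    rw [hE2, fr_sub_right, fr_sub_left, fr_sub_left, hvvvv, hfrPP, hfrP1P,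
      fr_comm (vv uh) (vv u₁), hfrP1P]
    ring
  have h4 : 1 - t2 ^ 2 ≤ fr Δ E2 := by
    have heq : fr Δ E2 = fr (vv u₁) E2 - fr Fh E2 := fr_sub_left E2 (vv u₁) Fh
    rw [heq, h1]
    linarith only [h2]
  have h5 : (fr Δ E2) ^ 2 ≤ D * (2 - 2 * t2 ^ 2) := by
    have h := fr_cauchy Δ E2
    rw [h3] at h
    exact h
  have hy2D : 1 - t2 ^ 2 ≤ 2 * D := by
    rcases eq_or_lt_of_le hy0 with h | h
    · linarith only [h, hD0]
    · have hsq : (1 - t2 ^ 2) * (1 - t2 ^ 2) ≤ fr Δ E2 * fr Δ E2 :=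
        mul_self_le_mul_self hy0 h4
      have hsq2 : fr Δ E2 * fr Δ E2 ≤ 2 * D * (1 - t2 ^ 2) := by
        calc fr Δ E2 * fr Δ E2 = (fr Δ E2) ^ 2 := (sq _).symm
          _ ≤ D * (2 - 2 * t2 ^ 2) := h5
          _ = 2 * D * (1 - t2 ^ 2) := by ring
      exact le_of_mul_le_mul_right (le_trans hsq hsq2) h
  -- expand the l2 norm
  have hl2exp : l2 (uh - u₁) ^ 2 = 2 - 2 * t2 := by
    have hnn : (0:ℝ) ≤ ∑ j, (uh - u₁) j ^ 2 := Finset.sum_nonneg fun j _ => sq_nonneg _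
    rw [l2, Real.sq_sqrt hnn]
    have hterm : ∀ j : Fin p, (uh - u₁) j ^ 2 = uh j ^ 2 + u₁ j ^ 2 - 2 * (uh j * u₁ j) := by
      intro j; simp only [Pi.sub_apply]; ring
    rw [Finset.sum_congr rfl fun j _ => hterm j]
    rw [Finset.sum_sub_distrib, Finset.sum_add_distrib, ← Finset.mul_sum,
      husq, huhsq, ht2, dotp]
    ring
  rw [hl2exp]
  have ht2le1 : t2 ≤ 1 :=
    le_trans (le_abs_self _) ((sq_le_one_iff_abs_le_one t2).mp ht2sq)
  have ht2le : t2 ^ 2 ≤ t2 := by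
    rw [sq]
    calc t2 * t2 ≤ t2 * 1 := mul_le_mul_of_nonneg_left ht2le1 ht0
      _ = t2 := mul_one _
  calc 2 - 2 * t2 ≤ 2 - 2 * t2 ^ 2 := by linarith only [ht2le]
    _ ≤ 4 * D := by linarith only [hy2D]
    _ ≤ 4 * (9 * (s : ℝ) ^ 2 * μ ^ 2 / (Λ₁ - Λ₂) ^ 2) := by linarith only [hDbound]
    _ = 4 * 9 * (s : ℝ) ^ 2 * μ ^ 2 / (Λ₁ - Λ₂) ^ 2 := by ring
end
end

section
/- Let Σ₀ ∈ ℝ^{p×p} be symmetric positive semidefinite with largest eigenvalue Λ₁ = Λ_max(Σ₀) strictly larger than its second largest eigenvalue Λ₂, and unit top eigenvector u₁ with at most s nonzero entries; set β⁰ := Λ₁^{1/2} u₁. Let Σ̃ be symmetric with μ ≥ 2‖Σ̃ − Σ₀‖_∞, let F̂ be the Fantope SDP estimator with tuning parameter μ, with eigendecomposition F̂ = Σ_{j=1}^p φ̂_j² û_j û_jᵀ (φ̂₁² ≥ ... ≥ φ̂_p² ≥ 0, û_j orthonormal, û₁ᵀu₁ ≥ 0), and let ε > 0 be such that ‖û₁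 − u₁‖₂² ≤ ε², Σ_{j=2}^p φ̂_j² ≤ ε, and ‖F̂‖₁ ≤ s + ε²/μ. Define the rescaled initial estimator β̂_init := |trace(Σ̃ F̂)|^{1/2} û₁ and α := s μ + ε² + 6‖β⁰‖₂² ε + 4‖β⁰‖₂ √ε. If Λ_max(Σ₀) > α, then ‖β̂_init − β⁰‖₂ ≤ α / (2√(Λ_max(Σ₀) − α)) + 2√ε · Λ_max(Σ₀)^{1/2}. -/
open Matrix Finset

noncomputable section

section Helpers
variable {p : ℕ}

lemma l2_nonneg (v : Fin p → ℝ) : 0 ≤ l2 v := Real.sqrt_nonneg _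

lemma l2_sq (v : Fin p → ℝ) : l2 v ^ 2 = ∑ j, v j ^ 2 :=
  Real.sq_sqrt (Finset.sum_nonneg fun _ _ => sq_nonneg _)

lemma dotp_self (v : Fin p → ℝ) : dotp v v = l2 v ^ 2 := by
  rw [l2_sq]; simp [dotp, sq]

lemma dotp_comm (v w : Fin p → ℝ) : dotp v w = dotp w v := by
  simp [dotp, mul_comm]

lemma dotp_add_right (x y z : Fin p → ℝ) : dotp x (y + z) = dotp x y + dotp x z := by
  simp [dotp, mul_add, Finset.sum_add_distrib]

lemma dotp_add_left (x y z : Fin p → ℝ) : dotp (x + y) z = dotp x z + dotp y z := by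
  simp [dotp, add_mul, Finset.sum_add_distrib]

lemma dotp_smul_right (c : ℝ) (x y : Fin p → ℝ) : dotp x (c • y) = c * dotp x y := by
  simp [dotp, Finset.mul_sum]; exact Finset.sum_congr rfl fun j _ => by ring

lemma abs_dotp_le (v w : Fin p → ℝ) : |dotp v w| ≤ l2 v * l2 w := by
  have h2 : (dotp v w) ^ 2 ≤ (l2 v * l2 w) ^ 2 := by
    rw [mul_pow, l2_sq, l2_sq]; exact Finset.sum_mul_sq_le_sq_mul_sq univ v w
  calc |dotp v w| = Real.sqrt ((dotp v w) ^ 2) := (Real.sqrt_sq_eq_abs _).symm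
    _ ≤ Real.sqrt ((l2 v * l2 w) ^ 2) := Real.sqrt_le_sqrt h2
    _ = |l2 v * l2 w| := Real.sqrt_sq_eq_abs _
    _ = l2 v * l2 w := abs_of_nonneg (mul_nonneg (l2_nonneg _) (l2_nonneg _))

lemma l2_add_le (v w : Fin p → ℝ) : l2 (v + w) ≤ l2 v + l2 w := by
  have hd : dotp v w ≤ l2 v * l2 w := le_trans (le_abs_self _) (abs_dotp_le v w)
  have e : l2 (v + w) ^ 2 = l2 v ^ 2 + 2 * dotp v w + l2 w ^ 2 := by
    simp only [l2_sq, dotp, Pi.add_apply]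
    rw [Finset.mul_sum, ← Finset.sum_add_distrib, ← Finset.sum_add_distrib]
    exact Finset.sum_congr rfl fun j _ => by ring
  have key : l2 (v + w) ^ 2 ≤ (l2 v + l2 w) ^ 2 := by nlinarith
  have h1 := l2_nonneg (v + w)
  nlinarith [l2_nonneg v, l2_nonneg w]

lemma l2_smul (c : ℝ) (v : Fin p → ℝ) : l2 (c • v) = |c| * l2 v := by
  simp only [l2, Pi.smul_apply, smul_eq_mul, mul_pow]
  rw [← Finset.mul_sum, Real.sqrt_mul (sq_nonneg c), Real.sqrt_sq_eq_abs]

end Helpers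


section TraceHelpers
variable {p : ℕ}

lemma trace_mul_vecMulVec (S : Matrix (Fin p) (Fin p) ℝ) (x : Fin p → ℝ) :
    (S * vecMulVec x x).trace = dotp x (S.mulVec x) := by
  simp only [Matrix.trace, Matrix.diag, Matrix.mul_apply, vecMulVec_apply, dotp,
    Matrix.mulVec, dotProduct, Finset.mul_sum]
  exact Finset.sum_congr rfl fun i _ => Finset.sum_congr rfl fun j _ => by ring

lemma trace_vecMulVec' (x : Fin p → ℝ) : (vecMulVec x x).trace = dotp x x := by
  simp [Matrix.trace, Matrix.diag, vecMulVec_apply, dotp]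

lemma dotp_mulVec_symm {S : Matrix (Fin p) (Fin p) ℝ} (hS : S.IsSymm) (x y : Fin p → ℝ) :
    dotp x (S.mulVec y) = dotp y (S.mulVec x) := by
  simp only [dotp, Matrix.mulVec, dotProduct, Finset.mul_sum]
  rw [Finset.sum_comm]
  exact Finset.sum_congr rfl fun i _ => Finset.sum_congr rfl fun j _ => by
    rw [hS.apply i j]; ring

lemma psd_dotp_nonneg {S : Matrix (Fin p) (Fin p) ℝ} (hS : S.PosSemidef) (x : Fin p → ℝ) :
    0 ≤ dotp x (S.mulVec x) := by
  have := hS.dotProduct_mulVec_nonneg x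
  simpa [dotp, dotProduct] using this

end TraceHelpers


private lemma arith_sq_eq_one {x : ℝ} (h0 : 0 ≤ x) (h1 : x ^ 2 = 1) : x = 1 := by
  nlinarith

private lemma arith_eps_lt {Λ a t e : ℝ} (hΛ : 0 < Λ) (ha : 0 ≤ a) (ht : 0 ≤ t)
    (he : 0 < e) (h : a + e ^ 2 + 6 * Λ * e + t < Λ) : e < 1 / 6 := by
  nlinarith

private lemma arith_sq_le {x e : ℝ} (hx : 0 ≤ x) (h : x ^ 2 ≤ e ^ 2) (he : 0 < e) :
    x ≤ e := by nlinarith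


set_option maxHeartbeats 2000000 in
/-- Bound on the rescaled initial estimator
`β̂_init = |trace(Σ̃ F̂)|^{1/2} û₁` built from the Fantope SDP solution. -/
theorem initial_estimator_bound
    (p s : ℕ) (S₀ St Fh : Matrix (Fin p) (Fin p) ℝ)
    (u₁ uh : Fin p → ℝ) (Λ₁ Λ₂ μ ε : ℝ)
    (hsymm₀ : S₀.IsSymm) (hpsd : S₀.PosSemidef)
    -- `u₁` is a unit eigenvector of `S₀` for the largest eigenvalue `Λ₁ = Λ_max(S₀)`
    (heig : S₀.mulVec u₁ = Λ₁ • u₁) (hu₁ : l2 u₁ = 1)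
    (htop : ∀ w : Fin p → ℝ, dotp w (S₀.mulVec w) ≤ Λ₁ * dotp w w)
    -- all other eigenvalues are at most `Λ₂ < Λ₁`
    (hsecond : ∀ w : Fin p → ℝ, dotp w u₁ = 0 → dotp w (S₀.mulVec w) ≤ Λ₂ * dotp w w)
    (hgap : Λ₂ < Λ₁)
    -- `u₁` has at most `s` nonzero entries
    (hsparse : ((univ : Finset (Fin p)).filter (fun j => u₁ j ≠ 0)).card ≤ s)
    (hsymmt : St.IsSymm) (hμ : 2 * msup (St - S₀) ≤ μ)
    (hFh : IsFantopeSol St μ Fh)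
    -- eigendecomposition `F̂ = ∑_j φ̂_j² û_j û_jᵀ` with orthonormal `û_j`,
    -- nonnegative eigenvalues, top eigenvector `û₁ = uh`
    (hdecomp : ∃ (d : Fin p → ℝ) (v : Fin p → Fin p → ℝ) (i₀ : Fin p),
      (∀ j k, dotp (v j) (v k) = if j = k then (1 : ℝ) else 0) ∧
      (∀ j, 0 ≤ d j) ∧ (∀ j, d j ≤ d i₀) ∧ v i₀ = uh ∧
      Fh = ∑ j, d j • vecMulVec (v j) (v j) ∧
      -- `∑_{j=2}^p φ̂_j² ≤ ε`
      ∑ j ∈ univ.erase i₀, d j ≤ ε)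
    (hsign : 0 ≤ dotp uh u₁)
    (hε : 0 < ε)
    (hclose : l2 (uh - u₁) ^ 2 ≤ ε ^ 2)
    (hl1Fh : m1 Fh ≤ (s : ℝ) + ε ^ 2 / μ) :
    -- with `β⁰ := Λ₁^{1/2} u₁`, `β̂_init := |trace(Σ̃ F̂)|^{1/2} û₁` and
    -- `α := sμ + ε² + 6‖β⁰‖₂²ε + 4‖β⁰‖₂√ε`, if `Λ_max(S₀) > α` then the bound holds
    ∀ β0 βinit : Fin p → ℝ, β0 = Real.sqrt Λ₁ • u₁ →
      βinit = Real.sqrt |(St * Fh).trace| • uh →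
      ∀ α : ℝ, α = (s : ℝ) * μ + ε ^ 2 + 6 * l2 β0 ^ 2 * ε + 4 * l2 β0 * Real.sqrt ε →
      α < Λ₁ →
      l2 (βinit - β0) ≤ α / (2 * Real.sqrt (Λ₁ - α)) + 2 * Real.sqrt ε * Real.sqrt Λ₁ := by
  obtain ⟨d, v, i₀, horth, hdnn, hdmax, hvi₀, hFdecomp, htail⟩ := hdecomp
  obtain ⟨⟨hFsymm, hFpsd, hFI, hFtr⟩, -⟩ := hFh
  intro β0 βinit hβ0 hβinit α hα hαΛ
  -- basic facts
  have hu₁sq : dotp u₁ u₁ = 1 := by rw [dotp_self, hu₁]; norm_num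
  have huhsq : dotp uh uh = 1 := by rw [← hvi₀]; simpa using horth i₀ i₀
  have hl2uh : l2 uh = 1 := by
    have h := dotp_self uh
    exact arith_sq_eq_one (l2_nonneg uh) (by rw [← h, huhsq])
  have hΛ₁eq : dotp u₁ (S₀.mulVec u₁) = Λ₁ := by
    rw [heig, dotp_smul_right, hu₁sq, mul_one]
  have hΛ₁nn : 0 ≤ Λ₁ := hΛ₁eq ▸ psd_dotp_nonneg hpsd u₁
  have hμnn : 0 ≤ μ := by
    have h0 : 0 ≤ msup (St - S₀) :=
      Real.iSup_nonneg fun j => Real.iSup_nonneg fun k => abs_nonneg _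
    linarith
  have hB : l2 β0 ^ 2 = Λ₁ := by
    rw [hβ0, l2_smul, hu₁, mul_one, sq_abs, Real.sq_sqrt hΛ₁nn]
  have hBval : l2 β0 = Real.sqrt Λ₁ := by
    rw [hβ0, l2_smul, hu₁, mul_one, abs_of_nonneg (Real.sqrt_nonneg _)]
  have hεsq : Real.sqrt ε ^ 2 = ε := Real.sq_sqrt hε.le
  have hεsnn : 0 ≤ Real.sqrt ε := Real.sqrt_nonneg _
  have hαval : α = (s : ℝ) * μ + ε ^ 2 + 6 * Λ₁ * ε + 4 * Real.sqrt Λ₁ * Real.sqrt ε := by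
    rw [hα, hB, hBval]
  have hΛ₁pos : 0 < Λ₁ := by
    have : 0 ≤ α := by
      rw [hαval]
      have := Real.sqrt_nonneg Λ₁
      positivity
    linarith
  have hεlt : ε < 1/6 := by
    have hsμ : 0 ≤ (s : ℝ) * μ := mul_nonneg (by positivity) hμnn
    have h4 : 0 ≤ 4 * Real.sqrt Λ₁ * Real.sqrt ε := by positivity
    exact arith_eps_lt hΛ₁pos hsμ h4 hε (by rw [← hαval]; exact hαΛ)
  -- δ = uh - u₁
  have hδ : l2 (uh - u₁) ≤ ε := arith_sq_le (l2_nonneg (uh - u₁)) hclose hε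
  have hdotδ : |dotp u₁ (uh - u₁)| ≤ ε := by
    have := abs_dotp_le u₁ (uh - u₁)
    rw [hu₁, one_mul] at this
    linarith
  -- eigen decomposition sums
  have hsumd : ∑ j, d j = 1 := by
    have : Fh.trace = ∑ j, d j := by
      rw [hFdecomp, trace_sum]
      refine Finset.sum_congr rfl fun j _ => ?_
      rw [trace_smul, trace_vecMulVec', horth j j]
      simp
    rw [← this, hFtr]
  have hdi₀ : 1 - ε ≤ d i₀ := by
    have := Finset.sum_erase_add univ d (Finset.mem_univ i₀)
    rw [hsumd] at this
    linarith
  -- q j = Rayleigh quotients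
  set q : Fin p → ℝ := fun j => dotp (v j) (S₀.mulVec (v j)) with hq
  have hq0 : ∀ j, 0 ≤ q j := fun j => psd_dotp_nonneg hpsd (v j)
  have hqΛ : ∀ j, q j ≤ Λ₁ := by
    intro j
    have := htop (v j)
    rwa [horth j j, if_pos rfl, mul_one] at this
  have hT₀ : (S₀ * Fh).trace = ∑ j, d j * q j := by
    rw [hFdecomp, Finset.mul_sum, trace_sum]
    refine Finset.sum_congr rfl fun j _ => ?_
    rw [Matrix.mul_smul, trace_smul, trace_mul_vecMulVec]
    simp only [hq, smul_eq_mul]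
  have hT₀up : (S₀ * Fh).trace ≤ Λ₁ := by
    rw [hT₀]
    calc ∑ j, d j * q j ≤ ∑ j, d j * Λ₁ :=
          Finset.sum_le_sum fun j _ => mul_le_mul_of_nonneg_left (hqΛ j) (hdnn j)
      _ = Λ₁ := by rw [← Finset.sum_mul, hsumd, one_mul]
  -- lower bound on q i₀ = uh' S₀ uh
  have hquh : Λ₁ - 2 * Λ₁ * ε ≤ q i₀ := by
    have huhrw : uh = u₁ + (uh - u₁) := by abel
    have hexp : q i₀ = Λ₁ + 2 * (Λ₁ * dotp u₁ (uh - u₁)) + dotp (uh - u₁) (S₀.mulVec (uh - u₁)) := by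
      simp only [hq, hvi₀]
      conv_lhs => rw [huhrw]
      rw [Matrix.mulVec_add, heig, dotp_add_left, dotp_add_right, dotp_add_right,
        dotp_smul_right, dotp_smul_right, hu₁sq,
        dotp_mulVec_symm hsymm₀ u₁ (uh - u₁), heig, dotp_smul_right,
        dotp_comm (uh - u₁) u₁]
      ring
    have h1 := psd_dotp_nonneg hpsd (uh - u₁)
    have h2 : -ε ≤ dotp u₁ (uh - u₁) := by
      have := abs_le.mp hdotδ; linarith
    have hprod : 0 ≤ Λ₁ * (dotp u₁ (uh - u₁) + ε) := mul_nonneg hΛ₁nn (by linarith)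
    linarith [hprod]
  have hT₀low : Λ₁ - 3 * Λ₁ * ε ≤ (S₀ * Fh).trace := by
    rw [hT₀]
    have hstep : d i₀ * q i₀ ≤ ∑ j, d j * q j :=
      Finset.single_le_sum (fun j _ => mul_nonneg (hdnn j) (hq0 j)) (Finset.mem_univ i₀)
    have hqnn := hq0 i₀
    have hqlb : 0 ≤ Λ₁ - 2 * Λ₁ * ε := by
      have := mul_le_mul_of_nonneg_left hεlt.le hΛ₁nn
      linarith
    have p1 : (1 - ε) * (Λ₁ - 2 * Λ₁ * ε) ≤ d i₀ * q i₀ :=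
      mul_le_mul hdi₀ hquh hqlb (hdnn i₀)
    have p2 : 0 ≤ Λ₁ * ε ^ 2 := mul_nonneg hΛ₁nn (sq_nonneg ε)
    linarith [p1, p2]
  -- error from St - S₀
  have hE : |((St - S₀) * Fh).trace| ≤ μ / 2 * m1 Fh := by
    have htr : ((St - S₀) * Fh).trace = ∑ i, ∑ k, (St - S₀) i k * Fh k i := by
      simp [Matrix.trace, Matrix.diag, Matrix.mul_apply]
    have hbd : ∀ i k : Fin p, |(St - S₀) i k| ≤ μ / 2 := by
      intro i k
      have h1 : |(St - S₀) i k| ≤ ⨆ k', |(St - S₀) i k'| :=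
        le_ciSup (f := fun k' => |(St - S₀) i k'|)
          (Set.Finite.bddAbove (Set.finite_range _)) k
      have h2 : (⨆ k', |(St - S₀) i k'|) ≤ msup (St - S₀) :=
        le_ciSup (f := fun i' => ⨆ k', |(St - S₀) i' k'|)
          (Set.Finite.bddAbove (Set.finite_range _)) i
      have : msup (St - S₀) ≤ μ / 2 := by linarith
      linarith
    rw [htr]
    calc |∑ i, ∑ k, (St - S₀) i k * Fh k i|
        ≤ ∑ i, |∑ k, (St - S₀) i k * Fh k i| := Finset.abs_sum_le_sum_abs _ _
      _ ≤ ∑ i, ∑ k, |(St - S₀) i k * Fh k i| :=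
          Finset.sum_le_sum fun i _ => Finset.abs_sum_le_sum_abs _ _
      _ ≤ ∑ i, ∑ k, μ / 2 * |Fh k i| := by
          refine Finset.sum_le_sum fun i _ => Finset.sum_le_sum fun k _ => ?_
          rw [abs_mul]
          exact mul_le_mul_of_nonneg_right (hbd i k) (abs_nonneg _)
      _ = μ / 2 * m1 Fh := by
          rw [m1, Finset.mul_sum, Finset.sum_comm]
          exact Finset.sum_congr rfl fun i _ => by rw [Finset.mul_sum]
  have hm1nn : 0 ≤ m1 Fh :=
    Finset.sum_nonneg fun i _ => Finset.sum_nonneg fun k _ => abs_nonneg _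
  have hEbd : |((St - S₀) * Fh).trace| ≤ ((s : ℝ) * μ + ε ^ 2) / 2 := by
    have h1 : μ * m1 Fh ≤ μ * ((s : ℝ) + ε ^ 2 / μ) :=
      mul_le_mul_of_nonneg_left hl1Fh hμnn
    have h2 : μ * ((s : ℝ) + ε ^ 2 / μ) ≤ (s : ℝ) * μ + ε ^ 2 := by
      rcases eq_or_lt_of_le hμnn with h0 | h0
      · rw [← h0]; simp; positivity
      · rw [mul_add, mul_div_cancel₀ _ (ne_of_gt h0)]; linarith
    linarith
  -- combine
  have hsplit : (St * Fh).trace = (S₀ * Fh).trace + ((St - S₀) * Fh).trace := by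
    rw [Matrix.sub_mul, Matrix.trace_sub]
    ring
  set T := (St * Fh).trace with hTdef
  have hEabs := abs_le.mp hEbd
  have hKα : 3 * Λ₁ * ε + ((s : ℝ) * μ + ε ^ 2) / 2 ≤ α := by
    rw [hαval]
    have h4 : 0 ≤ 4 * Real.sqrt Λ₁ * Real.sqrt ε := by positivity
    have hsμ : 0 ≤ (s : ℝ) * μ := mul_nonneg (Nat.cast_nonneg s) hμnn
    have hΛε : 0 ≤ Λ₁ * ε := mul_nonneg hΛ₁nn hε.le
    linarith [hΛε, sq_nonneg ε]
  have hTlow : Λ₁ - α ≤ T := by rw [hsplit]; linarith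
  have hThigh : T ≤ Λ₁ + α := by
    rw [hsplit]
    have hΛε : 0 ≤ Λ₁ * ε := mul_nonneg hΛ₁nn hε.le
    linarith [hΛε]
  have hTpos : 0 < T := by linarith
  -- square roots
  set a := Real.sqrt T with hadef
  set c := Real.sqrt (Λ₁ - α) with hcdef
  have hcpos : 0 < c := Real.sqrt_pos.mpr (by linarith)
  have ha2 : a ^ 2 = T := Real.sq_sqrt hTpos.le
  have hL2 : Real.sqrt Λ₁ ^ 2 = Λ₁ := Real.sq_sqrt hΛ₁nn
  have hac : c ≤ a := Real.sqrt_le_sqrt hTlow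
  have hLc : c ≤ Real.sqrt Λ₁ := Real.sqrt_le_sqrt (by linarith)
  have hann : 0 ≤ a := Real.sqrt_nonneg _
  have habs : |a - Real.sqrt Λ₁| ≤ α / (2 * c) := by
    rw [le_div_iff₀ (by positivity)]
    have hprod : |a - Real.sqrt Λ₁| * (a + Real.sqrt Λ₁) = |T - Λ₁| := by
      rw [← abs_of_nonneg (by positivity : (0:ℝ) ≤ a + Real.sqrt Λ₁), ← abs_mul]
      congr 1
      have hring : (a - Real.sqrt Λ₁) * (a + Real.sqrt Λ₁) = a ^ 2 - Real.sqrt Λ₁ ^ 2 := by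
        ring
      rw [hring, ha2, hL2]
    have hTL : |T - Λ₁| ≤ α := by
      rw [abs_le]
      constructor <;> linarith
    have h2c : 2 * c ≤ a + Real.sqrt Λ₁ := by linarith
    calc |a - Real.sqrt Λ₁| * (2 * c)
        ≤ |a - Real.sqrt Λ₁| * (a + Real.sqrt Λ₁) :=
          mul_le_mul_of_nonneg_left h2c (abs_nonneg _)
      _ = |T - Λ₁| := hprod
      _ ≤ α := hTL
  -- final assembly
  have hrw : βinit - β0 = (a - Real.sqrt Λ₁) • uh + Real.sqrt Λ₁ • (uh - u₁) := by
    rw [hβinit, hβ0, abs_of_pos hTpos, ← hadef]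
    funext j
    simp only [Pi.sub_apply, Pi.add_apply, Pi.smul_apply, smul_eq_mul]
    ring
  have hfinal : l2 (βinit - β0) ≤ |a - Real.sqrt Λ₁| + Real.sqrt Λ₁ * ε := by
    rw [hrw]
    calc l2 ((a - Real.sqrt Λ₁) • uh + Real.sqrt Λ₁ • (uh - u₁))
        ≤ l2 ((a - Real.sqrt Λ₁) • uh) + l2 (Real.sqrt Λ₁ • (uh - u₁)) := l2_add_le _ _
      _ = |a - Real.sqrt Λ₁| * l2 uh + |Real.sqrt Λ₁| * l2 (uh - u₁) := by
          rw [l2_smul, l2_smul]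
      _ ≤ |a - Real.sqrt Λ₁| + Real.sqrt Λ₁ * ε := by
          rw [hl2uh, mul_one, abs_of_nonneg (Real.sqrt_nonneg _)]
          have := mul_le_mul_of_nonneg_left hδ (Real.sqrt_nonneg Λ₁)
          linarith
  have hεterm : Real.sqrt Λ₁ * ε ≤ 2 * Real.sqrt ε * Real.sqrt Λ₁ := by
    have hs1 : Real.sqrt ε ≤ 1 := by
      rw [show (1:ℝ) = Real.sqrt 1 by simp]
      exact Real.sqrt_le_sqrt (by linarith)
    have hle : ε ≤ Real.sqrt ε := by
      have hm : Real.sqrt ε * Real.sqrt ε ≤ Real.sqrt ε * 1 :=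
        mul_le_mul_of_nonneg_left hs1 hεsnn
      have hms := Real.mul_self_sqrt hε.le
      linarith
    have h1 : Real.sqrt Λ₁ * ε ≤ Real.sqrt Λ₁ * Real.sqrt ε :=
      mul_le_mul_of_nonneg_left hle (Real.sqrt_nonneg Λ₁)
    have h2 : 0 ≤ Real.sqrt ε * Real.sqrt Λ₁ := mul_nonneg hεsnn (Real.sqrt_nonneg Λ₁)
    linarith [h1, h2]
  calc l2 (βinit - β0) ≤ |a - Real.sqrt Λ₁| + Real.sqrt Λ₁ * ε := hfinal
    _ ≤ α / (2 * c) + 2 * Real.sqrt ε * Real.sqrt Λ₁ := by linarith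
end
end
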